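/- arXiv:1510.08134 — 4 statements merged into one kernel-verified Lean document; each statement's English description precedes it below -/
import Mathlib

section
/- Let G be a finite group and {x_g : g ∈ G} a family of vectors in a Hilbert space H that is left G-stationary, i.e. ⟨x_g, x_{g'}⟩ = ⟨x_{hg}, x_{hg'}⟩ for all g, g', h ∈ G. Then there exists a unitary representation U of G on the span of {x_g} and a vector a such that x_g = U(g)a for all g ∈ G. -/
section Aux

variable {G : Type*} [Group G] [Fintype G]
    {H : Type*} [NormedAddCommGroup H] [InnerProductSpace ℂ H]
    (x : G → H)

/-- The linear map sending coefficients to the corresponding linear combination. -/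
noncomputable def stmtPi : (G → ℂ) →ₗ[ℂ] H := Fintype.linearCombination ℂ x

/-- The left-shift linear equivalence on coefficient functions. -/
noncomputable def stmtShift (h : G) : (G → ℂ) ≃ₗ[ℂ] (G → ℂ) where
  toFun c := fun u => c (h⁻¹ * u)
  invFun c := fun u => c (h * u)
  map_add' _ _ := rfl
  map_smul' _ _ := rfl
  left_inv c := by funext u; simp
  right_inv c := by funext u; simp

lemma stmtShift_one (c : G → ℂ) : stmtShift (G := G) 1 c = c := by
  funext u; simp [stmtShift]

lemma stmtShift_mul (g h : G) (c : G → ℂ) :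
    stmtShift (G := G) (g * h) c = stmtShift g (stmtShift h c) := by
  funext u
  simp [stmtShift, mul_inv_rev, mul_assoc]

lemma stmtPi_inner (c c' : G → ℂ) :
    (inner ℂ (stmtPi x c) (stmtPi x c') : ℂ) =
      ∑ g, ∑ g', starRingEnd ℂ (c g) * c' g' * inner ℂ (x g) (x g') := by
  simp only [stmtPi, Fintype.linearCombination_apply, sum_inner, inner_sum,
    inner_smul_left, inner_smul_right, Finset.mul_sum, Finset.sum_mul]
  rw [Finset.sum_comm]
  refine Finset.sum_congr rfl fun g _ => Finset.sum_congr rfl fun g' _ => ?_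
  ring

lemma stmtPi_shift_inner
    (hstat : ∀ g g' h : G,
      (inner ℂ (x g) (x g') : ℂ) = inner ℂ (x (h * g)) (x (h * g')))
    (h : G) (c c' : G → ℂ) :
    (inner ℂ (stmtPi x (stmtShift h c)) (stmtPi x (stmtShift h c')) : ℂ) =
      inner ℂ (stmtPi x c) (stmtPi x c') := by
  rw [stmtPi_inner, stmtPi_inner]
  refine Fintype.sum_equiv (Equiv.mulLeft h⁻¹) _ _ fun u => ?_
  refine Fintype.sum_equiv (Equiv.mulLeft h⁻¹) _ _ fun u' => ?_
  have hs := hstat (h⁻¹ * u) (h⁻¹ * u') h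
  rw [mul_inv_cancel_left, mul_inv_cancel_left] at hs
  simp only [stmtShift, LinearEquiv.coe_mk, LinearMap.coe_mk, AddHom.coe_mk, Equiv.coe_mulLeft, hs]

lemma stmtShift_ker
    (hstat : ∀ g g' h : G,
      (inner ℂ (x g) (x g') : ℂ) = inner ℂ (x (h * g)) (x (h * g')))
    (h : G) :
    (LinearMap.ker (stmtPi x)).map (stmtShift (G := G) h : (G → ℂ) →ₗ[ℂ] (G → ℂ)) = LinearMap.ker (stmtPi x) := by
  have key : ∀ (h : G) (c : G → ℂ), stmtPi x c = 0 → stmtPi x (stmtShift h c) = 0 := by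
    intro h c hc
    rw [← inner_self_eq_zero (𝕜 := ℂ), stmtPi_shift_inner x hstat, hc, inner_zero_left]
  apply le_antisymm
  · rintro _ ⟨c, hc, rfl⟩
    exact key h c hc
  · intro c hc
    refine ⟨stmtShift h⁻¹ c, ?_, ?_⟩
    · have := key h⁻¹ c hc
      exact this
    · rw [LinearEquiv.coe_coe, ← stmtShift_mul, mul_inv_cancel, stmtShift_one]

end Aux

theorem stmt_1 {G : Type*} [Group G] [Fintype G]
    {H : Type*} [NormedAddCommGroup H] [InnerProductSpace ℂ H]
    (x : G → H)
    (hstat : ∀ g g' h : G,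
      (inner ℂ (x g) (x g') : ℂ) = inner ℂ (x (h * g)) (x (h * g'))) :
    ∃ (U : G →* (↥(Submodule.span ℂ (Set.range x)) ≃ₗᵢ[ℂ]
        ↥(Submodule.span ℂ (Set.range x))))
      (a : ↥(Submodule.span ℂ (Set.range x))),
      ∀ g : G, ((U g a : ↥(Submodule.span ℂ (Set.range x))) : H) = x g := by
  classical
  set π := stmtPi x with hπ
  have hrange : LinearMap.range π = Submodule.span ℂ (Set.range x) :=
    Fintype.range_linearCombination ℂ x
  -- equivalence from quotient to the span
  let e : ((G → ℂ) ⧸ LinearMap.ker π) ≃ₗ[ℂ] ↥(Submodule.span ℂ (Set.range x)) :=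
    π.quotKerEquivRange.trans (LinearEquiv.ofEq _ _ hrange)
  have he : ∀ c : G → ℂ, ((e (Submodule.Quotient.mk c) : ↥(Submodule.span ℂ (Set.range x))) : H) = π c := by
    intro c
    simp only [e, LinearEquiv.trans_apply]
    rw [show ((LinearEquiv.ofEq _ _ hrange) (π.quotKerEquivRange (Submodule.Quotient.mk c)) : H)
        = ((π.quotKerEquivRange (Submodule.Quotient.mk c) : ↥(LinearMap.range π)) : H) from rfl]
    exact π.quotKerEquivRange_apply_mk c
  have hesurj : Function.Surjective e := e.surjective
  -- the induced map on the quotient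
  let q : G → ((G → ℂ) ⧸ LinearMap.ker π) ≃ₗ[ℂ] ((G → ℂ) ⧸ LinearMap.ker π) :=
    fun h => Submodule.Quotient.equiv _ _ (stmtShift h) (stmtShift_ker x hstat h)
  have hq : ∀ (h : G) (c : G → ℂ),
      q h (Submodule.Quotient.mk c) = Submodule.Quotient.mk (stmtShift h c) := fun _ _ => rfl
  -- the linear equivalence on the span
  let A : G → (↥(Submodule.span ℂ (Set.range x)) ≃ₗ[ℂ] ↥(Submodule.span ℂ (Set.range x))) :=
    fun h => e.symm.trans ((q h).trans e)
  have hA : ∀ (h : G) (c : G → ℂ),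
      A h (e (Submodule.Quotient.mk c)) = e (Submodule.Quotient.mk (stmtShift h c)) := by
    intro h c
    simp only [A, LinearEquiv.trans_apply, LinearEquiv.symm_apply_apply, hq]
  have hAinner : ∀ (h : G) (v w : ↥(Submodule.span ℂ (Set.range x))),
      (inner ℂ (A h v) (A h w) : ℂ) = inner ℂ v w := by
    intro h v w
    obtain ⟨qv, rfl⟩ := hesurj v
    obtain ⟨qw, rfl⟩ := hesurj w
    induction qv using Submodule.Quotient.induction_on with | H c =>
    induction qw using Submodule.Quotient.induction_on with | H c' =>
    rw [hA, hA]
    show (inner ℂ ((e (Submodule.Quotient.mk (stmtShift h c)) : ↥(Submodule.span ℂ (Set.range x))) : H) ((e (Submodule.Quotient.mk (stmtShift h c')) : ↥(Submodule.span ℂ (Set.range x))) : H) : ℂ) = inner ℂ ((e (Submodule.Quotient.mk c) : ↥(Submodule.span ℂ (Set.range x))) : H) ((e (Submodule.Quotient.mk c') : ↥(Submodule.span ℂ (Set.range x))) : H)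
    rw [he, he, he, he]
    exact stmtPi_shift_inner x hstat h c c'
  let Ui : G → (↥(Submodule.span ℂ (Set.range x)) ≃ₗᵢ[ℂ] ↥(Submodule.span ℂ (Set.range x))) :=
    fun h => (A h).isometryOfInner (hAinner h)
  have hUi : ∀ (h : G) (c : G → ℂ),
      Ui h (e (Submodule.Quotient.mk c)) = e (Submodule.Quotient.mk (stmtShift h c)) := by
    intro h c
    show A h _ = _
    exact hA h c
  have hUiext : ∀ (f g : ↥(Submodule.span ℂ (Set.range x)) ≃ₗᵢ[ℂ] ↥(Submodule.span ℂ (Set.range x))),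
      (∀ c : G → ℂ, f (e (Submodule.Quotient.mk c)) = g (e (Submodule.Quotient.mk c))) → f = g := by
    intro f g hfg
    ext v
    obtain ⟨qv, rfl⟩ := hesurj v
    induction qv using Submodule.Quotient.induction_on with | H c =>
    exact congrArg Subtype.val (hfg c)
  refine ⟨{ toFun := Ui, map_one' := ?_, map_mul' := ?_ },
    e (Submodule.Quotient.mk (Pi.single 1 1)), ?_⟩
  · refine hUiext _ _ fun c => ?_
    rw [hUi, stmtShift_one]
    rfl
  · intro g h
    refine hUiext _ _ fun c => ?_
    rw [LinearIsometryEquiv.coe_mul, Function.comp_apply, hUi, hUi, hUi, stmtShift_mul]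
  · intro g
    show ((Ui g (e (Submodule.Quotient.mk (Pi.single 1 1))) : ↥(Submodule.span ℂ (Set.range x))) : H) = x g
    rw [hUi, he]
    have : stmtShift (G := G) g (Pi.single 1 1) = Pi.single g 1 := by
      funext u
      simp only [stmtShift, LinearEquiv.coe_mk, LinearMap.coe_mk, AddHom.coe_mk]
      by_cases hu : u = g
      · subst hu; rw [inv_mul_cancel]; simp
      · rw [Pi.single_eq_of_ne hu, Pi.single_eq_of_ne]
        intro hc
        exact hu (by rwa [inv_mul_eq_one, eq_comm] at hc)
    rw [this]
    simp [hπ, stmtPi]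
end

section
/- Let G be a finite group, U a unitary representation of G on H, a, b_1,…,b_N ∈ H with {U(g)a}_{g∈G} linearly independent spanning A_a, K = {τ_0=e,…,τ_{ℓ−1}} an abelian subgroup of G with complement H₀ of order |G|/ℓ, and R_{b,a} the Nℓ×|G| cross-covariance matrix with rows indexed by (j,n) and entries R_{b_j,a}(τ_n⁻¹ s) = ⟨b_j, U(τ_n⁻¹ s)a⟩ for s ∈ G. If rank R_{b,a} = |G|, then there exist vectors c_1,…,c_N ∈ A_a such that {U(τ_n)c_j : j = 1,…,N, n = 0,…,ℓ−1} spans A_a and every x ∈ A_a satisfies x = Σ_{j=1}^N Σ_{n=0}^{ℓ−1} L_j x(τ_n) · U(τ_n) c_j, where L_j x(τ_n) = ⟨U(τ_n)b_j, x⟩. -/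
theorem stmt_13 {G : Type*} [Group G] [Fintype G]
    {H : Type*} [NormedAddCommGroup H] [InnerProductSpace ℂ H]
    (U : G →* (H ≃ₗᵢ[ℂ] H)) (a : H)
    (ha : LinearIndependent ℂ (fun g : G => U g a))
    (A : Submodule ℂ H) (hA : A = Submodule.span ℂ (Set.range fun g : G => U g a))
    {N ℓ : ℕ} (b : Fin N → H)
    (K : Subgroup G) (hKab : ∀ x ∈ K, ∀ y ∈ K, x * y = y * x)
    (hKcard : Nat.card K = ℓ)
    (H₀ : Subgroup G) (hcompl : ∀ g : G, ∃ k ∈ K, ∃ h ∈ H₀, g = k * h)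
    (htriv : K ⊓ H₀ = ⊥) (hH₀card : Nat.card H₀ = Fintype.card G / ℓ)
    (τ : Fin ℓ → G) (hτrange : Set.range τ = (K : Set G)) (hτinj : Function.Injective τ)
    (hτ0 : ∀ h0 : 0 < ℓ, τ ⟨0, h0⟩ = 1)
    (R : Matrix (Fin N × Fin ℓ) G ℂ)
    (hR : ∀ (j : Fin N) (n : Fin ℓ) (s : G),
      R (j, n) s = (inner ℂ (b j) (U ((τ n)⁻¹ * s) a) : ℂ))
    (hrank : R.rank = Fintype.card G) :
    ∃ c : Fin N → H, (∀ j, c j ∈ A) ∧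
      Submodule.span ℂ (Set.range fun p : Fin N × Fin ℓ => U (τ p.2) (c p.1)) = A ∧
      ∀ x ∈ A, x = ∑ j : Fin N, ∑ n : Fin ℓ,
        (inner ℂ (U (τ n) (b j)) x : ℂ) • U (τ n) (c j) := by
  classical
  have hUU : ∀ (g h : G) (x : H), U g (U h x) = U (g*h) x := by
    intro g h x; rw [map_mul]; rfl
  have hU1 : ∀ x : H, U 1 x = x := by intro x; rw [map_one]; rfl
  have hadj : ∀ (g : G) (v w : H), (inner ℂ (U g v) w : ℂ) = inner ℂ v (U g⁻¹ w) := by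
    intro g v w
    conv_lhs => rw [show w = U g (U g⁻¹ w) by rw [hUU, mul_inv_cancel, hU1]]
    exact (U g).inner_map_map v (U g⁻¹ w)
  -- A is invariant
  have hAinv : ∀ (g : G), ∀ x ∈ A, U g x ∈ A := by
    intro g x hx
    rw [hA] at hx ⊢
    induction hx using Submodule.span_induction with
    | mem y hy =>
      obtain ⟨s, rfl⟩ := hy
      exact Submodule.subset_span ⟨g*s, by rw [hUU]⟩
    | zero => simpa using Submodule.zero_mem _
    | add y z _ _ hy hz => simpa [map_add] using Submodule.add_mem _ hy hz
    | smul r y _ hy => simpa [map_smul] using Submodule.smul_mem _ r hy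
  -- the sampling map
  let L : H →ₗ[ℂ] ((Fin N × Fin ℓ) → ℂ) :=
    LinearMap.pi (fun p => ((innerSL ℂ (U (τ p.2) (b p.1))).toLinearMap))
  have hLapp : ∀ (x : H) (p : Fin N × Fin ℓ), L x p = (inner ℂ (U (τ p.2) (b p.1)) x : ℂ) := by
    intro x p; rfl
  -- injectivity of mulVec from the rank condition
  have hmv : ∀ α : G → ℂ, R.mulVec α = 0 → α = 0 := by
    have hker : LinearMap.ker R.mulVecLin = ⊥ := by
      have h1 := R.mulVecLin.finrank_range_add_finrank_ker
      have h2 : Module.finrank ℂ (G → ℂ) = Fintype.card G :=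
        Module.finrank_fintype_fun_eq_card ℂ
      have h3 : Module.finrank ℂ (LinearMap.range R.mulVecLin) = Fintype.card G := hrank
      rw [h2, h3] at h1
      have h4 : Module.finrank ℂ (LinearMap.ker R.mulVecLin) = 0 := by omega
      exact Submodule.finrank_eq_zero.mp h4
    intro α hα
    have h5 : α ∈ LinearMap.ker R.mulVecLin := by
      rw [LinearMap.mem_ker, Matrix.mulVecLin_apply]; exact hα
    rw [hker] at h5
    simpa using h5
  -- L on the generators is a column of R
  have hLgen : ∀ (s : G) (p : Fin N × Fin ℓ), L (U s a) p = R p s := by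
    intro s p
    obtain ⟨j, n⟩ := p
    rw [hLapp, hadj, hUU, hR j n s]
  -- injectivity of L on A
  have hLinj : ∀ x ∈ A, L x = 0 → x = 0 := by
    intro x hx hLx
    rw [hA, Submodule.mem_span_range_iff_exists_fun ℂ] at hx
    obtain ⟨α, rfl⟩ := hx
    have hα : R.mulVec α = 0 := by
      funext p
      have : L (∑ s : G, α s • U s a) p = 0 := by rw [hLx]; rfl
      rw [map_sum] at this
      simp only [map_smul, Finset.sum_apply, Pi.smul_apply] at this
      calc R.mulVec α p = ∑ s : G, R p s * α s := by
            simp [Matrix.mulVec, dotProduct]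
        _ = ∑ s : G, α s • L (U s a) p := by
            refine Finset.sum_congr rfl fun s _ => ?_
            rw [hLgen, smul_eq_mul, mul_comm]
        _ = 0 := this
    rw [hmv α hα]
    simp
  -- left inverse
  let Lr : A →ₗ[ℂ] ((Fin N × Fin ℓ) → ℂ) := L.comp A.subtype
  have hkerLr : LinearMap.ker Lr = ⊥ := by
    rw [LinearMap.ker_eq_bot']
    intro x hx
    exact Subtype.ext (hLinj x x.2 hx)
  obtain ⟨S, hS⟩ := Lr.exists_leftInverse_of_injective hkerLr
  let d : Fin N × Fin ℓ → A := fun p => S (Pi.single p 1)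
  have hd : ∀ x ∈ A, x = ∑ p : Fin N × Fin ℓ,
      (inner ℂ (U (τ p.2) (b p.1)) x : ℂ) • (d p : H) := by
    intro x hx
    have h2 : S (Lr ⟨x, hx⟩) = ⟨x, hx⟩ := by
      rw [← LinearMap.comp_apply, hS]; rfl
    have h3 : Lr ⟨x, hx⟩ = ∑ p : Fin N × Fin ℓ, (L x p) • (Pi.single p 1 : (Fin N × Fin ℓ) → ℂ) := by
      funext q
      simp [Lr, Finset.sum_apply, Pi.single_apply]
    have h4 : (⟨x, hx⟩ : A) = ∑ p : Fin N × Fin ℓ, (L x p) • d p := by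
      rw [← h2, h3, map_sum]
      simp [d, map_smul]
    have h5 := congrArg (Subtype.val) h4
    simpa [hLapp] using h5
  -- set up K as an index type
  haveI : Fintype K := Fintype.ofFinite K
  have hℓcard : Fintype.card K = ℓ := by rw [← Nat.card_eq_fintype_card, hKcard]
  have hℓpos : 0 < ℓ := hℓcard ▸ Fintype.card_pos
  let f : Fin ℓ → K := fun n => ⟨τ n, by
    have : τ n ∈ (K : Set G) := hτrange ▸ Set.mem_range_self n
    exact this⟩
  have hfinj : Function.Injective f := fun m n h => hτinj (congrArg Subtype.val h)
  have hfbij : Function.Bijective f :=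
    (Fintype.bijective_iff_injective_and_card f).mpr ⟨hfinj, by simp [hℓcard]⟩
  let eτ : Fin ℓ ≃ K := Equiv.ofBijective f hfbij
  have heτ : ∀ n : Fin ℓ, ((eτ n : K) : G) = τ n := fun n => rfl
  let d' : Fin N → K → A := fun j k => d (j, eτ.symm k)
  -- the reconstruction indexed by K
  have hdK : ∀ x ∈ A, x = ∑ j : Fin N, ∑ k : K,
      (inner ℂ (U (k : G) (b j)) x : ℂ) • (d' j k : H) := by
    intro x hx
    conv_lhs => rw [hd x hx]
    rw [Fintype.sum_prod_type]
    refine Finset.sum_congr rfl fun j _ => ?_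
    rw [← Equiv.sum_comp eτ
      (fun k : K => (inner ℂ (U (k : G) (b j)) x : ℂ) • (d' j k : H))]
    refine Finset.sum_congr rfl fun n _ => ?_
    simp only [heτ, d', Equiv.symm_apply_apply]
  -- the averaged vectors
  let c : Fin N → H := fun j => (ℓ : ℂ)⁻¹ • ∑ m : K, U (m : G) ((d' j m⁻¹ : H))
  have hcA : ∀ j, c j ∈ A :=
    fun j => A.smul_mem _ (Submodule.sum_mem _ fun m _ => hAinv _ _ (d' j m⁻¹).2)
  -- the shifted averaged vectors
  have hUc : ∀ (j : Fin N) (k : K),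
      U (k : G) (c j) = (ℓ : ℂ)⁻¹ • ∑ m : K, U (m : G) ((d' j (m⁻¹ * k) : H)) := by
    intro j k
    have h1 : U (k : G) (c j)
        = (ℓ : ℂ)⁻¹ • ∑ m : K, U ((k * m : K) : G) ((d' j m⁻¹ : H)) := by
      simp only [c, map_smul, map_sum, hUU, Subgroup.coe_mul]
    rw [h1]
    congr 1
    rw [← Equiv.sum_comp (Equiv.mulLeft k)
      (fun m : K => U (m : G) ((d' j (m⁻¹ * k) : H)))]
    refine Finset.sum_congr rfl fun m _ => ?_
    simp [mul_inv_rev, mul_assoc]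
  -- the key translation identity
  have hT : ∀ x ∈ A, ∀ m : K, ∑ j : Fin N, ∑ k : K,
      (inner ℂ (U (k : G) (b j)) x : ℂ) • U (m : G) ((d' j (m⁻¹ * k) : H)) = x := by
    intro x hx m
    have hy := hdK (U ((m : G))⁻¹ x) (hAinv _ _ hx)
    have h1 : x = ∑ j : Fin N, ∑ k : K,
        (inner ℂ (U ((m : G) * (k : G)) (b j)) x : ℂ) • U (m : G) ((d' j k : H)) := by
      conv_lhs => rw [show x = U (m : G) (U ((m : G))⁻¹ x) by
        rw [hUU, mul_inv_cancel, hU1]]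
      conv_lhs => rw [hy]
      rw [map_sum]
      refine Finset.sum_congr rfl fun j _ => ?_
      rw [map_sum]
      refine Finset.sum_congr rfl fun k _ => ?_
      rw [map_smul]
      congr 1
      calc (inner ℂ (U (k : G) (b j)) (U ((m : G))⁻¹ x) : ℂ)
          = inner ℂ (U (m : G) (U (k : G) (b j))) x := (hadj _ _ _).symm
        _ = _ := by rw [hUU]
    conv_rhs => rw [h1]
    refine Finset.sum_congr rfl fun j _ => ?_
    rw [← Equiv.sum_comp (Equiv.mulLeft m)
      (fun k : K => (inner ℂ (U (k : G) (b j)) x : ℂ) • U (m : G) ((d' j (m⁻¹ * k) : H)))]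
    refine Finset.sum_congr rfl fun k _ => ?_
    simp [mul_assoc]
  -- main reconstruction identity over K
  have hmainK : ∀ x ∈ A, x = ∑ j : Fin N, ∑ k : K,
      (inner ℂ (U (k : G) (b j)) x : ℂ) • U (k : G) (c j) := by
    intro x hx
    refine Eq.symm ?_
    calc ∑ j : Fin N, ∑ k : K, (inner ℂ (U (k : G) (b j)) x : ℂ) • U (k : G) (c j)
        = ∑ j : Fin N, ∑ k : K, ∑ m : K, (ℓ : ℂ)⁻¹ •
            ((inner ℂ (U (k : G) (b j)) x : ℂ) • U (m : G) ((d' j (m⁻¹ * k) : H))) := by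
          refine Finset.sum_congr rfl fun j _ => Finset.sum_congr rfl fun k _ => ?_
          rw [hUc, smul_comm, Finset.smul_sum, Finset.smul_sum]
      _ = ∑ j : Fin N, ∑ m : K, ∑ k : K, (ℓ : ℂ)⁻¹ •
            ((inner ℂ (U (k : G) (b j)) x : ℂ) • U (m : G) ((d' j (m⁻¹ * k) : H))) :=
          Finset.sum_congr rfl fun j _ => Finset.sum_comm
      _ = ∑ m : K, ∑ j : Fin N, ∑ k : K, (ℓ : ℂ)⁻¹ •
            ((inner ℂ (U (k : G) (b j)) x : ℂ) • U (m : G) ((d' j (m⁻¹ * k) : H))) :=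
          Finset.sum_comm
      _ = ∑ _m : K, (ℓ : ℂ)⁻¹ • x := by
          refine Finset.sum_congr rfl fun m _ => ?_
          calc ∑ j : Fin N, ∑ k : K, (ℓ : ℂ)⁻¹ •
                ((inner ℂ (U (k : G) (b j)) x : ℂ) • U (m : G) ((d' j (m⁻¹ * k) : H)))
              = (ℓ : ℂ)⁻¹ • ∑ j : Fin N, ∑ k : K,
                  (inner ℂ (U (k : G) (b j)) x : ℂ) • U (m : G) ((d' j (m⁻¹ * k) : H)) := by
                rw [Finset.smul_sum]
                exact Finset.sum_congr rfl fun j _ => (Finset.smul_sum).symm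
            _ = (ℓ : ℂ)⁻¹ • x := by rw [hT x hx m]
      _ = x := by
          rw [Finset.sum_const, Finset.card_univ, hℓcard, ← Nat.cast_smul_eq_nsmul ℂ,
            smul_smul, mul_inv_cancel₀ (by exact_mod_cast hℓpos.ne' : (ℓ : ℂ) ≠ 0), one_smul]
  -- conclusion
  refine ⟨c, hcA, ?_, ?_⟩
  · have hfin : ∀ x ∈ A, x = ∑ j : Fin N, ∑ n : Fin ℓ,
        (inner ℂ (U (τ n) (b j)) x : ℂ) • U (τ n) (c j) := by
      intro x hx
      conv_lhs => rw [hmainK x hx]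
      refine Finset.sum_congr rfl fun j _ => ?_
      rw [← Equiv.sum_comp eτ
        (fun k : K => (inner ℂ (U (k : G) (b j)) x : ℂ) • U (k : G) (c j))]
      rfl
    apply le_antisymm
    · rw [Submodule.span_le]
      rintro _ ⟨p, rfl⟩
      exact hAinv _ _ (hcA p.1)
    · intro x hx
      rw [hfin x hx]
      exact Submodule.sum_mem _ fun j _ => Submodule.sum_mem _ fun n _ =>
        Submodule.smul_mem _ _ (Submodule.subset_span ⟨(j, n), rfl⟩)
  · intro x hx
    conv_lhs => rw [hmainK x hx]
    refine Finset.sum_congr rfl fun j _ => ?_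
    rw [← Equiv.sum_comp eτ
      (fun k : K => (inner ℂ (U (k : G) (b j)) x : ℂ) • U (k : G) (c j))]
    rfl
end

section
/- In the setting of the previous theorem, the following are equivalent: (1) rank R_{b,a} = |G|; (2) there exist vectors c_j ∈ A_a such that {U(τ_n)c_j} spans A_a and the sampling expansion x = Σ_{j,n} L_j x(τ_n) U(τ_n)c_j holds for all x ∈ A_a; (3) there exists some family {C_{j,n}} in A_a such that x = Σ_{j,n} L_j x(τ_n) C_{j,n} for all x ∈ A_a. -/
theorem stmt_14 {G : Type*} [Group G] [Fintype G]
    {H : Type*} [NormedAddCommGroup H] [InnerProductSpace ℂ H]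
    (U : G →* (H ≃ₗᵢ[ℂ] H)) (a : H)
    (ha : LinearIndependent ℂ (fun g : G => U g a))
    (A : Submodule ℂ H) (hA : A = Submodule.span ℂ (Set.range fun g : G => U g a))
    {N ℓ : ℕ} (b : Fin N → H)
    (K : Subgroup G) (hKab : ∀ x ∈ K, ∀ y ∈ K, x * y = y * x)
    (hKcard : Nat.card K = ℓ)
    (H₀ : Subgroup G) (hcompl : ∀ g : G, ∃ k ∈ K, ∃ h ∈ H₀, g = k * h)
    (htriv : K ⊓ H₀ = ⊥)
    (τ : Fin ℓ → G) (hτrange : Set.range τ = (K : Set G)) (hτinj : Function.Injective τ)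
    (R : Matrix (Fin N × Fin ℓ) G ℂ)
    (hR : ∀ (j : Fin N) (n : Fin ℓ) (s : G),
      R (j, n) s = (inner ℂ (b j) (U ((τ n)⁻¹ * s) a) : ℂ)) :
    ((R.rank = Fintype.card G) ↔
      (∃ c : Fin N → H, (∀ j, c j ∈ A) ∧
        Submodule.span ℂ (Set.range fun p : Fin N × Fin ℓ => U (τ p.2) (c p.1)) = A ∧
        ∀ x ∈ A, x = ∑ j : Fin N, ∑ n : Fin ℓ,
          (inner ℂ (U (τ n) (b j)) x : ℂ) • U (τ n) (c j)))
    ∧ ((R.rank = Fintype.card G) ↔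
      (∃ C : Fin N → Fin ℓ → H, (∀ j n, C j n ∈ A) ∧
        ∀ x ∈ A, x = ∑ j : Fin N, ∑ n : Fin ℓ,
          (inner ℂ (U (τ n) (b j)) x : ℂ) • C j n)) := by
  classical
  -- basic facts about U
  have hUmul : ∀ (g h : G) (x : H), U g (U h x) = U (g * h) x := by
    intro g h x; rw [map_mul]; rfl
  have hUinv : ∀ (g : G) (x : H), U g (U (g⁻¹) x) = x := by
    intro g x; rw [hUmul, mul_inv_cancel, map_one]; rfl
  -- generators are in A
  have hgen : ∀ s : G, U s a ∈ A := by
    intro s; rw [hA]; exact Submodule.subset_span ⟨s, rfl⟩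
  -- A is U-invariant
  have hinv : ∀ (g : G) (x : H), x ∈ A → U g x ∈ A := by
    intro g x hx
    rw [hA] at hx ⊢
    induction hx using Submodule.span_induction with
    | mem y hy =>
      obtain ⟨s, rfl⟩ := hy
      exact Submodule.subset_span ⟨g * s, (hUmul g s a).symm⟩
    | zero => simp only [map_zero]; exact (Submodule.span ℂ (Set.range fun g : G => U g a)).zero_mem
    | add y z hy hz ihy ihz => rw [map_add]; exact Submodule.add_mem _ ihy ihz
    | smul r y hy ihy => rw [map_smul]; exact Submodule.smul_mem _ r ihy
  -- the sampling map
  let Φ : H →ₗ[ℂ] (Fin N × Fin ℓ → ℂ) :=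
    LinearMap.pi fun p => (innerSL ℂ (U (τ p.2) (b p.1))).toLinearMap
  have hΦ : ∀ (x : H) (p : Fin N × Fin ℓ), Φ x p = (inner ℂ (U (τ p.2) (b p.1)) x : ℂ) :=
    fun x p => rfl
  -- columns of R
  have hcol : ∀ s : G, R.transpose s = Φ (U s a) := by
    intro s; funext p
    obtain ⟨j, n⟩ := p
    rw [Matrix.transpose_apply, hR, hΦ]
    show (inner ℂ (b j) (U ((τ n)⁻¹ * s) a) : ℂ) = inner ℂ (U (τ n) (b j)) (U s a)
    rw [show U s a = U (τ n) (U ((τ n)⁻¹ * s) a) by rw [hUmul, mul_inv_cancel_left],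
      LinearIsometryEquiv.inner_map_map]
  -- rank condition
  have hrank : R.rank = Fintype.card G ↔ LinearIndependent ℂ (fun s : G => Φ (U s a)) := by
    have h1 : (fun s : G => Φ (U s a)) = (fun s => R.transpose s) := funext fun s => (hcol s).symm
    have h2 : R.rank = Set.finrank ℂ (Set.range (fun s => R.transpose s)) := by
      rw [Matrix.rank, Matrix.range_mulVecLin]; rfl
    rw [h1, h2, linearIndependent_iff_card_eq_finrank_span, eq_comm]
  -- representation of elements of A
  have hrepr : ∀ x ∈ A, ∃ v : G → ℂ, x = ∑ s : G, v s • U s a := by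
    intro x hx
    rw [hA] at hx
    obtain ⟨v, hv⟩ := Finsupp.mem_span_range_iff_exists_finsupp.1 hx
    refine ⟨v, ?_⟩
    rw [← hv, Finsupp.sum_fintype]
    intro s; simp
  -- statement (3) from injectivity
  have h13 : LinearIndependent ℂ (fun s : G => Φ (U s a)) →
      ∃ C : Fin N → Fin ℓ → H, (∀ j n, C j n ∈ A) ∧
        ∀ x ∈ A, x = ∑ j : Fin N, ∑ n : Fin ℓ,
          (inner ℂ (U (τ n) (b j)) x : ℂ) • C j n := by
    intro hli
    have hker : LinearMap.ker (Φ.comp A.subtype) = ⊥ := by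
      rw [LinearMap.ker_eq_bot']
      rintro ⟨x, hx⟩ hx0
      obtain ⟨v, rfl⟩ := hrepr x hx
      have hΦ0 : Φ (∑ s : G, v s • U s a) = 0 := hx0
      rw [map_sum] at hΦ0
      simp only [map_smul] at hΦ0
      have hv0 := Fintype.linearIndependent_iff.1 hli v hΦ0
      ext
      simp only [Submodule.coe_zero]
      exact Finset.sum_eq_zero fun s _ => by rw [hv0 s, zero_smul]
    obtain ⟨Ψ, hΨ⟩ := (Φ.comp A.subtype).exists_leftInverse_of_injective hker
    refine ⟨fun j n => (Ψ (Pi.single (j, n) 1) : H), fun j n => (Ψ (Pi.single (j, n) 1)).2, ?_⟩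
    intro x hx
    have key : Ψ (Φ x) = ⟨x, hx⟩ := by
      have := congrArg (fun f => f ⟨x, hx⟩) hΨ
      simpa using this
    have hdecomp : Φ x = ∑ p : Fin N × Fin ℓ, Φ x p • (Pi.single p 1 : Fin N × Fin ℓ → ℂ) := by
      conv_lhs => rw [← Finset.univ_sum_single (Φ x)]
      refine Finset.sum_congr rfl fun p _ => ?_
      rw [← Pi.single_smul, smul_eq_mul, mul_one]
    have : (⟨x, hx⟩ : A) = ∑ p : Fin N × Fin ℓ, Φ x p • Ψ (Pi.single p 1) := by
      rw [← key]
      conv_lhs => rw [hdecomp]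
      rw [map_sum]
      simp only [map_smul]
    have hx' := congrArg (Subtype.val) this
    simp only [Submodule.coe_sum, Submodule.coe_smul] at hx'
    rw [Fintype.sum_prod_type] at hx'
    exact hx'
  -- statement (3) implies injectivity
  have h31 : (∃ C : Fin N → Fin ℓ → H, (∀ j n, C j n ∈ A) ∧
        ∀ x ∈ A, x = ∑ j : Fin N, ∑ n : Fin ℓ,
          (inner ℂ (U (τ n) (b j)) x : ℂ) • C j n) →
      LinearIndependent ℂ (fun s : G => Φ (U s a)) := by
    rintro ⟨C, hC, hCexp⟩
    rw [Fintype.linearIndependent_iff]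
    intro v hv s
    have hxA : (∑ s : G, v s • U s a) ∈ A := Submodule.sum_mem _ fun s _ =>
      Submodule.smul_mem _ _ (hgen s)
    have hΦ0 : Φ (∑ s : G, v s • U s a) = 0 := by
      rw [map_sum]; simpa only [map_smul] using hv
    have hx0 : (∑ s : G, v s • U s a) = 0 := by
      rw [hCexp _ hxA]
      refine Finset.sum_eq_zero fun j _ => Finset.sum_eq_zero fun n _ => ?_
      rw [← hΦ (∑ s : G, v s • U s a) (j, n), hΦ0]
      simp
    exact Fintype.linearIndependent_iff.1 ha v hx0 s
  -- statement (1) implies statement (2)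
  have h12 : LinearIndependent ℂ (fun s : G => Φ (U s a)) →
      ∃ c : Fin N → H, (∀ j, c j ∈ A) ∧
        Submodule.span ℂ (Set.range fun p : Fin N × Fin ℓ => U (τ p.2) (c p.1)) = A ∧
        ∀ x ∈ A, x = ∑ j : Fin N, ∑ n : Fin ℓ,
          (inner ℂ (U (τ n) (b j)) x : ℂ) • U (τ n) (c j) := by
    intro hli
    obtain ⟨C, hC, hCexp⟩ := h13 hli
    -- ℓ is positive
    have h1r : (1 : G) ∈ Set.range τ := by rw [hτrange]; exact K.one_mem
    obtain ⟨n0, -⟩ := h1r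
    have hℓne : (ℓ : ℂ) ≠ 0 := Nat.cast_ne_zero.2 n0.pos.ne'
    -- the enumeration of K
    have hτK : ∀ n, τ n ∈ K := fun n => by rw [← SetLike.mem_coe, ← hτrange]; exact Set.mem_range_self n
    let e : Fin ℓ ≃ K := Equiv.ofBijective (fun n => (⟨τ n, hτK n⟩ : K))
      ⟨fun m n h => hτinj (congrArg Subtype.val h),
       fun k => by
         have hk : (k : G) ∈ Set.range τ := by rw [hτrange]; exact k.2
         obtain ⟨n, hn⟩ := hk
         exact ⟨n, Subtype.ext hn⟩⟩
    have he : ∀ n, ((e n : K) : G) = τ n := fun n => rfl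
    have hesymm : ∀ k : K, τ (e.symm k) = (k : G) := fun k =>
      congrArg Subtype.val (e.apply_symm_apply k)
    have hgrp : ∀ m σ : Fin ℓ, τ m * (((e m)⁻¹ * e σ : K) : G) = τ σ := fun m σ =>
      mul_inv_cancel_left (τ m) (τ σ)
    -- the averaged vectors
    let c : Fin N → H := fun j => (ℓ : ℂ)⁻¹ • ∑ m : Fin ℓ, U (τ m) (C j (e.symm (e m)⁻¹))
    have hcdef : ∀ j, c j = (ℓ : ℂ)⁻¹ • ∑ m : Fin ℓ, U (τ m) (C j (e.symm (e m)⁻¹)) :=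
      fun j => rfl
    have hcA : ∀ j, c j ∈ A := fun j =>
      Submodule.smul_mem _ _ (Submodule.sum_mem _ fun m _ => hinv _ _ (hC _ _))
    -- translated inner products
    have hinner : ∀ (m n : Fin ℓ) (j : Fin N) (x : H),
        (inner ℂ (U (τ n) (b j)) (U ((τ m)⁻¹) x) : ℂ) = inner ℂ (U (τ m * τ n) (b j)) x := by
      intro m n j x
      rw [← hUmul]
      rw [← LinearIsometryEquiv.inner_map_map (U (τ m)) (U (τ n) (b j)) (U ((τ m)⁻¹) x), hUinv]
    -- the translated expansion
    have hstar : ∀ (m : Fin ℓ), ∀ x ∈ A, x = ∑ j : Fin N, ∑ n : Fin ℓ,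
        (inner ℂ (U (τ m * τ n) (b j)) x : ℂ) • U (τ m) (C j n) := by
      intro m x hx
      have h2 := congrArg (U (τ m)) (hCexp _ (hinv ((τ m)⁻¹) x hx))
      rw [hUinv] at h2
      refine h2.trans ?_
      rw [map_sum]
      refine Finset.sum_congr rfl fun j _ => ?_
      rw [map_sum]
      refine Finset.sum_congr rfl fun n _ => ?_
      rw [map_smul, hinner]
    -- summing the translated expansions
    have hsum : ∀ x ∈ A, (ℓ : ℂ) • x = ∑ m : Fin ℓ, ∑ j : Fin N, ∑ n : Fin ℓ,
        (inner ℂ (U (τ m * τ n) (b j)) x : ℂ) • U (τ m) (C j n) := by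
      intro x hx
      have hconst : ∑ m : Fin ℓ, x = ∑ m : Fin ℓ, ∑ j : Fin N, ∑ n : Fin ℓ,
          (inner ℂ (U (τ m * τ n) (b j)) x : ℂ) • U (τ m) (C j n) :=
        Finset.sum_congr rfl fun m _ => hstar m x hx
      rw [← hconst, Finset.sum_const, Finset.card_univ, Fintype.card_fin,
        Nat.cast_smul_eq_nsmul]
    -- the key reindexed sum
    have hinner_sum : ∀ (j : Fin N) (σ : Fin ℓ),
        ∑ m : Fin ℓ, U (τ m) (C j (e.symm ((e m)⁻¹ * e σ))) = (ℓ : ℂ) • U (τ σ) (c j) := by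
      intro j σ
      have h1 : U (τ σ) (c j) = (ℓ : ℂ)⁻¹ •
          ∑ p : Fin ℓ, U (τ σ) (U (τ p) (C j (e.symm (e p)⁻¹))) := by
        rw [hcdef j, map_smul, map_sum]
      rw [h1, smul_smul, mul_inv_cancel₀ hℓne, one_smul]
      refine Fintype.sum_equiv (e.trans ((Equiv.mulLeft ((e σ)⁻¹)).trans e.symm)) _ _ ?_
      intro m
      simp only [Equiv.trans_apply, Equiv.coe_mulLeft, Equiv.apply_symm_apply]
      rw [hesymm, mul_inv_rev, inv_inv, hUmul, hgrp]
    -- the reindexing equivalence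
    let ψ : Fin ℓ × Fin ℓ ≃ Fin ℓ × Fin ℓ :=
      { toFun := fun q => (e.symm (e q.1 * e q.2), q.1)
        invFun := fun q => (q.2, e.symm ((e q.2)⁻¹ * e q.1))
        left_inv := fun q => by
          simp only [Equiv.apply_symm_apply, inv_mul_cancel_left, Equiv.symm_apply_apply]
        right_inv := fun q => by
          simp only [Equiv.apply_symm_apply, mul_inv_cancel_left, Equiv.symm_apply_apply] }
    -- the sampling expansion
    have hexp2 : ∀ x ∈ A, x = ∑ j : Fin N, ∑ n : Fin ℓ,
        (inner ℂ (U (τ n) (b j)) x : ℂ) • U (τ n) (c j) := by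
      intro x hx
      apply smul_right_injective H hℓne
      show (ℓ : ℂ) • x = (ℓ : ℂ) • ∑ j : Fin N, ∑ n : Fin ℓ,
        (inner ℂ (U (τ n) (b j)) x : ℂ) • U (τ n) (c j)
      rw [hsum x hx, Finset.sum_comm, Finset.smul_sum]
      refine Finset.sum_congr rfl fun j _ => ?_
      calc ∑ m : Fin ℓ, ∑ n : Fin ℓ,
            (inner ℂ (U (τ m * τ n) (b j)) x : ℂ) • U (τ m) (C j n)
          = ∑ q : Fin ℓ × Fin ℓ,
            (inner ℂ (U (τ q.1 * τ q.2) (b j)) x : ℂ) • U (τ q.1) (C j q.2) :=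
            (Fintype.sum_prod_type (f := fun q : Fin ℓ × Fin ℓ =>
              (inner ℂ (U (τ q.1 * τ q.2) (b j)) x : ℂ) • U (τ q.1) (C j q.2))).symm
        _ = ∑ q : Fin ℓ × Fin ℓ,
            (inner ℂ (U (τ (ψ.symm q).1 * τ (ψ.symm q).2) (b j)) x : ℂ) •
              U (τ (ψ.symm q).1) (C j (ψ.symm q).2) :=
            (Equiv.sum_comp ψ.symm (fun q : Fin ℓ × Fin ℓ =>
              (inner ℂ (U (τ q.1 * τ q.2) (b j)) x : ℂ) • U (τ q.1) (C j q.2))).symm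
        _ = ∑ σ : Fin ℓ, ∑ m : Fin ℓ,
            (inner ℂ (U (τ m * τ (e.symm ((e m)⁻¹ * e σ))) (b j)) x : ℂ) •
              U (τ m) (C j (e.symm ((e m)⁻¹ * e σ))) :=
            Fintype.sum_prod_type (f := fun q : Fin ℓ × Fin ℓ =>
              (inner ℂ (U (τ q.2 * τ (e.symm ((e q.2)⁻¹ * e q.1))) (b j)) x : ℂ) •
                U (τ q.2) (C j (e.symm ((e q.2)⁻¹ * e q.1))))
        _ = ∑ σ : Fin ℓ, (inner ℂ (U (τ σ) (b j)) x : ℂ) •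
              ∑ m : Fin ℓ, U (τ m) (C j (e.symm ((e m)⁻¹ * e σ))) := by
            refine Finset.sum_congr rfl fun σ _ => ?_
            rw [Finset.smul_sum]
            refine Finset.sum_congr rfl fun m _ => ?_
            rw [hesymm, hgrp]
        _ = ∑ σ : Fin ℓ, (inner ℂ (U (τ σ) (b j)) x : ℂ) • ((ℓ : ℂ) • U (τ σ) (c j)) := by
            refine Finset.sum_congr rfl fun σ _ => ?_
            rw [hinner_sum j σ]
        _ = (ℓ : ℂ) • ∑ σ : Fin ℓ, (inner ℂ (U (τ σ) (b j)) x : ℂ) • U (τ σ) (c j) := by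
            rw [Finset.smul_sum]
            exact Finset.sum_congr rfl fun σ _ => smul_comm _ _ _
    -- the span condition
    have hspan2 : Submodule.span ℂ
        (Set.range fun p : Fin N × Fin ℓ => U (τ p.2) (c p.1)) = A := by
      refine le_antisymm ?_ ?_
      · rw [Submodule.span_le]
        rintro - ⟨p, rfl⟩
        exact hinv _ _ (hcA p.1)
      · intro x hx
        rw [show x = ∑ j : Fin N, ∑ n : Fin ℓ,
          (inner ℂ (U (τ n) (b j)) x : ℂ) • U (τ n) (c j) from hexp2 x hx]
        exact Submodule.sum_mem _ fun j _ => Submodule.sum_mem _ fun n _ =>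
          Submodule.smul_mem _ _ (Submodule.subset_span ⟨(j, n), rfl⟩)
    exact ⟨c, hcA, hspan2, hexp2⟩
  -- assemble
  have h23 : (∃ c : Fin N → H, (∀ j, c j ∈ A) ∧
        Submodule.span ℂ (Set.range fun p : Fin N × Fin ℓ => U (τ p.2) (c p.1)) = A ∧
        ∀ x ∈ A, x = ∑ j : Fin N, ∑ n : Fin ℓ,
          (inner ℂ (U (τ n) (b j)) x : ℂ) • U (τ n) (c j)) →
      ∃ C : Fin N → Fin ℓ → H, (∀ j n, C j n ∈ A) ∧
        ∀ x ∈ A, x = ∑ j : Fin N, ∑ n : Fin ℓ,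
          (inner ℂ (U (τ n) (b j)) x : ℂ) • C j n := by
    rintro ⟨c, hcA, -, hexp⟩
    exact ⟨fun j n => U (τ n) (c j), fun j n => hinv _ _ (hcA j), hexp⟩
  constructor
  · exact ⟨fun h => h12 (hrank.1 h), fun h2 => hrank.2 (h31 (h23 h2))⟩
  · exact ⟨fun h => h13 (hrank.1 h), fun h3 => hrank.2 (h31 h3)⟩
end

section
/- Let U be a unitary operator on a Hilbert space H and a ∈ H with U^M a = a and {a, Ua, …, U^{M−1}a} linearly independent. Let r divide M, ℓ = M/r, and b_1,…,b_N ∈ H. If the Nℓ×M matrix with entries ⟨b_j, U^{rn+m}a⟩ (rows indexed by (j,n), columns by m ∈ ℤ_M) has rank M, then there exist c_1,…,c_N in A_a = span{U^k a : 0 ≤ k < M} such that every x ∈ A_a satisfies x = Σ_{j=1}^N Σ_{n=0}^{ℓ−1} ⟨U^{rn}b_j, x⟩ U^{rn} c_j. -/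
open Finset Module

theorem stmt_17 {H : Type*} [NormedAddCommGroup H] [InnerProductSpace ℂ H]
    (U : H ≃ₗᵢ[ℂ] H) (a : H) {M r ℓ N : ℕ}
    (hM : 0 < M) (hUa : (U ^ M) a = a)
    (ha : LinearIndependent ℂ (fun k : Fin M => (U ^ (k : ℕ)) a))
    (hr : r ∣ M) (hℓ : ℓ = M / r)
    (A : Submodule ℂ H)
    (hA : A = Submodule.span ℂ (Set.range fun k : Fin M => (U ^ (k : ℕ)) a))
    (b : Fin N → H)
    (Q : Matrix (Fin N × Fin ℓ) (Fin M) ℂ)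
    (hQ : ∀ (j : Fin N) (n : Fin ℓ) (m : Fin M),
      Q (j, n) m = (inner ℂ (b j) ((U ^ (r * (n : ℕ) + (m : ℕ))) a) : ℂ))
    (hrank : Q.rank = M) :
    ∃ c : Fin N → H, (∀ j, c j ∈ A) ∧
      ∀ x ∈ A, x = ∑ j : Fin N, ∑ n : Fin ℓ,
        (inner ℂ ((U ^ (r * (n : ℕ))) (b j)) x : ℂ) • (U ^ (r * (n : ℕ))) (c j) := by
  classical
  have hr0 : 0 < r := by
    rcases Nat.eq_zero_or_pos r with h | h
    · subst h; rw [zero_dvd_iff] at hr; omega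
    · exact h
  have hl : r * ℓ = M := by rw [hℓ]; exact Nat.mul_div_cancel' hr
  have hℓ0 : 0 < ℓ := by
    rcases Nat.eq_zero_or_pos ℓ with h | h
    · subst h; simp at hl; omega
    · exact h
  haveI : NeZero ℓ := ⟨hℓ0.ne'⟩
  -- basic power manipulation
  have hpow : ∀ (s t : ℕ) (v : H), (U ^ (s + t)) v = (U ^ s) ((U ^ t) v) := by
    intro s t v
    rw [pow_add]
    rfl
  have hgen : ∀ k : Fin M, (U ^ (k : ℕ)) a ∈ A := by
    intro k; rw [hA]; exact Submodule.subset_span ⟨k, rfl⟩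
  have haA : a ∈ A := by
    have := hgen ⟨0, hM⟩
    simpa using this
  -- U^M fixes A pointwise
  have hfix : ∀ x ∈ A, (U ^ M) x = x := by
    intro x hx
    rw [hA] at hx
    induction hx using Submodule.span_induction with
    | mem v hv =>
      obtain ⟨k, rfl⟩ := hv
      rw [← hpow, add_comm, hpow, hUa]
    | zero => simp
    | add u v _ _ hu hv => rw [map_add, hu, hv]
    | smul c u _ hu => rw [map_smul, hu]
  have hfixq : ∀ x ∈ A, ∀ q : ℕ, (U ^ (M * q)) x = x := by
    intro x hx q
    induction q with
    | zero => simp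
    | succ q ih => rw [Nat.mul_succ, hpow, hfix x hx, ih]
  have hUeq : ∀ x ∈ A, ∀ s t : ℕ, s % M = t % M → (U ^ s) x = (U ^ t) x := by
    intro x hx s t hst
    have h1 : ∀ u : ℕ, (U ^ u) x = (U ^ (u % M)) x := by
      intro u
      conv_lhs => rw [← Nat.mod_add_div u M]
      rw [hpow, hfixq x hx]
    rw [h1 s, h1 t, hst]
  -- periodicity of inner products against elements of A
  have hinnerper : ∀ x ∈ A, ∀ (v : H) (w : ℕ),
      (inner ℂ ((U ^ (w + M)) v) x : ℂ) = inner ℂ ((U ^ w) v) x := by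
    intro x hx v w
    conv_lhs => rw [← hfix x hx]
    rw [add_comm w M, hpow]
    exact LinearIsometryEquiv.inner_map_map (U ^ M) _ _
  have hinnerq : ∀ x ∈ A, ∀ (v : H) (w q : ℕ),
      (inner ℂ ((U ^ (w + M * q)) v) x : ℂ) = inner ℂ ((U ^ w) v) x := by
    intro x hx v w q
    induction q with
    | zero => simp
    | succ q ih => rw [Nat.mul_succ, ← add_assoc, hinnerper x hx, ih]
  have hinner : ∀ x ∈ A, ∀ (v : H) (s t : ℕ), s % M = t % M →
      (inner ℂ ((U ^ s) v) x : ℂ) = inner ℂ ((U ^ t) v) x := by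
    intro x hx v s t hst
    have h1 : ∀ u : ℕ, (inner ℂ ((U ^ u) v) x : ℂ) = inner ℂ ((U ^ (u % M)) v) x := by
      intro u
      conv_lhs => rw [← Nat.mod_add_div u M]
      exact hinnerq x hx v _ _
    rw [h1 s, h1 t, hst]
  -- A is invariant under U
  have hU1 : ∀ x ∈ A, U x ∈ A := by
    intro x hx
    rw [hA] at hx
    induction hx using Submodule.span_induction with
    | mem v hv =>
      obtain ⟨k, rfl⟩ := hv
      have h1 : U ((U ^ (k : ℕ)) a) = (U ^ ((k : ℕ) + 1)) a := by
        rw [add_comm, hpow, pow_one]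
      have h2 : (U ^ ((k : ℕ) + 1)) a = (U ^ (((k : ℕ) + 1) % M)) a :=
        hUeq a haA _ _ (by simp [Nat.mod_mod_of_dvd])
      rw [h1, h2]
      exact hgen ⟨((k : ℕ) + 1) % M, Nat.mod_lt _ hM⟩
    | zero => simp
    | add u v _ _ hu hv => rw [map_add]; exact A.add_mem hu hv
    | smul c u _ hu => rw [map_smul]; exact A.smul_mem c hu
  have hUmem : ∀ x ∈ A, ∀ s : ℕ, (U ^ s) x ∈ A := by
    intro x hx s
    induction s with
    | zero => simpa using hx
    | succ s ih =>
      have h1 : (U ^ (s + 1)) x = U ((U ^ s) x) := by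
        rw [add_comm, hpow, pow_one]
      rw [h1]; exact hU1 _ ih
  -- arithmetic of subtraction in `Fin ℓ`
  have hsub : ∀ n g : Fin ℓ, ((g - n : Fin ℓ) : ℕ) + (n : ℕ) = (g : ℕ) ∨
      ((g - n : Fin ℓ) : ℕ) + (n : ℕ) = (g : ℕ) + ℓ := by
    intro n g
    have h1 : (((g - n) + n : Fin ℓ) : ℕ) = (g : ℕ) := by rw [sub_add_cancel]
    rw [Fin.val_add] at h1
    have h2 := (g - n).isLt
    have h3 := n.isLt
    have h4 := g.isLt
    rcases Nat.lt_or_ge (((g - n : Fin ℓ) : ℕ) + (n : ℕ)) ℓ with h | h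
    · left; rwa [Nat.mod_eq_of_lt h] at h1
    · right
      rw [Nat.mod_eq_sub_mod h, Nat.mod_eq_of_lt (by omega)] at h1
      omega
  -- the matrix of inner products against the basis vectors is a row permutation of Q
  have hRQ : ∀ (j : Fin N) (n : Fin ℓ) (k : Fin M),
      (inner ℂ ((U ^ (r * (n : ℕ))) (b j)) ((U ^ (k : ℕ)) a) : ℂ) = Q (j, -n) k := by
    intro j n k
    rw [hQ]
    have hdn : ((-n : Fin ℓ) : ℕ) + (n : ℕ) = 0 ∨ ((-n : Fin ℓ) : ℕ) + (n : ℕ) = ℓ := by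
      have := hsub n 0
      simpa [zero_sub] using this
    have hmod : (r * (n : ℕ) + (r * ((-n : Fin ℓ) : ℕ) + (k : ℕ))) % M = (k : ℕ) % M := by
      rcases hdn with h | h
      · have h1 : (n : ℕ) = 0 := by omega
        have h2 : ((-n : Fin ℓ) : ℕ) = 0 := by omega
        rw [h1, h2]; simp
      · have h1 : r * (n : ℕ) + r * ((-n : Fin ℓ) : ℕ) = M := by
          rw [← Nat.mul_add, show (n : ℕ) + ((-n : Fin ℓ) : ℕ) = ℓ from by omega, hl]
        calc (r * (n : ℕ) + (r * ((-n : Fin ℓ) : ℕ) + (k : ℕ))) % M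
            = (M + (k : ℕ)) % M := by rw [← Nat.add_assoc, h1]
          _ = (k : ℕ) % M := Nat.add_mod_left M _
    have e1 : (U ^ (r * (n : ℕ) + (r * ((-n : Fin ℓ) : ℕ) + (k : ℕ)))) a = (U ^ (k : ℕ)) a :=
      hUeq a haA _ _ hmod
    calc (inner ℂ ((U ^ (r * (n : ℕ))) (b j)) ((U ^ (k : ℕ)) a) : ℂ)
        = inner ℂ ((U ^ (r * (n : ℕ))) (b j))
            ((U ^ (r * (n : ℕ))) ((U ^ (r * ((-n : Fin ℓ) : ℕ) + (k : ℕ))) a)) := by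
          rw [← hpow, e1]
      _ = inner ℂ (b j) ((U ^ (r * ((-n : Fin ℓ) : ℕ) + (k : ℕ))) a) :=
          LinearIsometryEquiv.inner_map_map _ _ _
  -- a basis of A
  haveI : FiniteDimensional ℂ A := by
    rw [hA]
    exact FiniteDimensional.span_of_finite ℂ (Set.finite_range _)
  obtain ⟨bB, hbB⟩ : ∃ bb : Basis (Fin M) ℂ A, ∀ k : Fin M, (bb k : H) = (U ^ (k : ℕ)) a :=
    ⟨(Basis.span ha).map (LinearEquiv.ofEq _ _ hA.symm), fun k => by
      simp [Basis.map_apply, Basis.span_apply]⟩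
  -- the analysis operator
  let Tlin : H →ₗ[ℂ] (Fin N × Fin ℓ → ℂ) :=
    LinearMap.pi fun p => (innerSL ℂ ((U ^ (r * (p.2 : ℕ))) (b p.1))).toLinearMap
  have hT : ∀ (v : H) (j : Fin N) (n : Fin ℓ),
      Tlin v (j, n) = inner ℂ ((U ^ (r * (n : ℕ))) (b j)) v := fun _ _ _ => rfl
  -- injectivity of Q
  have hQker : ∀ v : Fin M → ℂ, Q.mulVec v = 0 → v = 0 := by
    intro v hv
    have h1 := LinearMap.finrank_range_add_finrank_ker Q.mulVecLin
    have h2 : finrank ℂ (Fin M → ℂ) = M := by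
      simp [Module.finrank_fintype_fun_eq_card]
    have h3 : finrank ℂ (LinearMap.range Q.mulVecLin) = M := hrank
    rw [h2, h3] at h1
    have h4 : LinearMap.ker Q.mulVecLin = ⊥ :=
      Submodule.finrank_eq_zero.mp (by omega)
    have h5 : v ∈ LinearMap.ker Q.mulVecLin := by
      rw [LinearMap.mem_ker, Matrix.mulVecLin_apply, hv]
    rw [h4] at h5
    simpa using h5
  -- injectivity of the analysis operator restricted to A
  have hTker : LinearMap.ker (Tlin.comp A.subtype) = ⊥ := by
    rw [LinearMap.ker_eq_bot']
    intro x hx0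
    have hxr : (x : H) = ∑ k : Fin M, bB.repr x k • (U ^ (k : ℕ)) a := by
      conv_lhs => rw [← bB.sum_repr x]
      rw [AddSubmonoidClass.coe_finset_sum]
      exact Finset.sum_congr rfl fun k _ => by rw [SetLike.val_smul, hbB]
    have hQv : Q.mulVec (fun k => bB.repr x k) = 0 := by
      funext p
      obtain ⟨j, n⟩ := p
      have h1 : Tlin (x : H) (j, -n) = 0 := congrFun hx0 (j, -n)
      rw [hT, hxr, inner_sum] at h1
      simp only [inner_smul_right] at h1
      calc Q.mulVec (fun k => bB.repr x k) (j, n)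
          = ∑ k : Fin M, (bB.repr x) k *
              (inner ℂ ((U ^ (r * ((-n : Fin ℓ) : ℕ))) (b j)) ((U ^ (k : ℕ)) a) : ℂ) := by
            simp only [Matrix.mulVec, dotProduct]
            exact Finset.sum_congr rfl fun k _ => by rw [hRQ j (-n) k, neg_neg, mul_comm]
        _ = 0 := h1
    have hv0 := hQker _ hQv
    have hrepr0 : bB.repr x = 0 := Finsupp.ext fun k => congrFun hv0 k
    exact bB.repr.map_eq_zero_iff.mp hrepr0
  -- left inverse of the analysis operator
  obtain ⟨P, hP⟩ := (Tlin.comp A.subtype).exists_leftInverse_of_injective hTker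
  have hPT : ∀ y : A, P (Tlin (y : H)) = y := fun y => DFunLike.congr_fun hP y
  -- the building blocks of the dual windows
  obtain ⟨z, hz⟩ : ∃ z : Fin N → Fin ℓ → H,
      ∀ j g, z j g = ((P (Pi.single (j, g) 1) : A) : H) := ⟨_, fun _ _ => rfl⟩
  have hzA : ∀ j g, z j g ∈ A := fun j g => by rw [hz]; exact (P (Pi.single (j, g) 1)).2
  -- decomposition of P
  have hPdec : ∀ y : Fin N × Fin ℓ → ℂ,
      P y = ∑ j : Fin N, ∑ n : Fin ℓ, y (j, n) • P (Pi.single (j, n) 1) := by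
    intro y
    have h1 : y = ∑ j : Fin N, ∑ n : Fin ℓ, Pi.single (j, n) (y (j, n)) :=
      ((Finset.univ_sum_single y).symm).trans (Fintype.sum_prod_type _)
    calc P y = P (∑ j : Fin N, ∑ n : Fin ℓ, Pi.single (j, n) (y (j, n))) := by rw [← h1]
      _ = ∑ j : Fin N, ∑ n : Fin ℓ, P (Pi.single (j, n) (y (j, n))) := by
          rw [map_sum]
          exact Finset.sum_congr rfl fun j _ => map_sum _ _ _
      _ = ∑ j : Fin N, ∑ n : Fin ℓ, y (j, n) • P (Pi.single (j, n) 1) := by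
          refine Finset.sum_congr rfl fun j _ => Finset.sum_congr rfl fun n _ => ?_
          rw [← map_smul]
          congr 1
          rw [← Pi.single_smul, smul_eq_mul, mul_one]
  -- U^{r(ℓ-h)} ∘ U^{rh} = id on A
  have he2 : ∀ (h : Fin ℓ) (w : H), w ∈ A →
      (U ^ (r * (ℓ - (h : ℕ)))) ((U ^ (r * (h : ℕ))) w) = w := by
    intro h w hw
    have hm : r * (ℓ - (h : ℕ)) + r * (h : ℕ) = M := by
      rw [← Nat.mul_add]
      have hh := h.isLt
      rw [show ℓ - (h : ℕ) + (h : ℕ) = ℓ from by omega]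
      exact hl
    rw [← hpow, hm]
    exact hfix w hw
  -- the dual windows
  let c : Fin N → H := fun j => (ℓ : ℂ)⁻¹ • ∑ g : Fin ℓ, (U ^ (r * (ℓ - (g : ℕ)))) (z j g)
  have hcdef : ∀ j, c j = (ℓ : ℂ)⁻¹ • ∑ g : Fin ℓ, (U ^ (r * (ℓ - (g : ℕ)))) (z j g) :=
    fun _ => rfl
  refine ⟨c, ?_, ?_⟩
  · intro j
    rw [hcdef]
    exact A.smul_mem _ (Submodule.sum_mem A fun g _ => hUmem _ (hzA j g) _)
  · intro x hx
    -- coefficient shift lemma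
    have hcoef : ∀ (j : Fin N) (n h : Fin ℓ),
        (inner ℂ ((U ^ (r * (n : ℕ))) (b j)) ((U ^ (r * (h : ℕ))) x) : ℂ)
          = inner ℂ ((U ^ (r * ((n : ℕ) + ℓ - (h : ℕ)))) (b j)) x := by
      intro j n h
      have e1 : (U ^ (r * ((n : ℕ) + ℓ - (h : ℕ)))) (b j)
          = (U ^ (r * (ℓ - (h : ℕ)))) ((U ^ (r * (n : ℕ))) (b j)) := by
        rw [← hpow, ← Nat.mul_add]
        have hh := h.isLt
        rw [show ℓ - (h : ℕ) + (n : ℕ) = (n : ℕ) + ℓ - (h : ℕ) from by omega]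
      conv_rhs => rw [e1, ← he2 h x hx]
      exact (LinearIsometryEquiv.inner_map_map _ _ _).symm
    -- expansion of the averaged reconstruction terms
    have hSexp : ∀ h : Fin ℓ,
        (U ^ (r * (ℓ - (h : ℕ)))) ((P (Tlin ((U ^ (r * (h : ℕ))) x)) : H))
          = ∑ j : Fin N, ∑ n : Fin ℓ,
              (inner ℂ ((U ^ (r * ((n : ℕ) + ℓ - (h : ℕ)))) (b j)) x : ℂ)
                • (U ^ (r * (ℓ - (h : ℕ)))) (z j n) := by
      intro h
      have s1 : ((P (Tlin ((U ^ (r * (h : ℕ))) x)) : A) : H)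
          = ∑ j : Fin N, ∑ n : Fin ℓ, Tlin ((U ^ (r * (h : ℕ))) x) (j, n) • z j n := by
        rw [hPdec]
        rw [AddSubmonoidClass.coe_finset_sum]
        refine Finset.sum_congr rfl fun j _ => ?_
        rw [AddSubmonoidClass.coe_finset_sum]
        refine Finset.sum_congr rfl fun n _ => ?_
        rw [SetLike.val_smul, hz]
      rw [s1, map_sum]
      refine Finset.sum_congr rfl fun j _ => ?_
      rw [map_sum]
      refine Finset.sum_congr rfl fun n _ => ?_
      rw [map_smul]
      congr 1
      rw [hT]
      exact hcoef j n h
    -- each averaged term reconstructs x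
    have hSx : ∀ h : Fin ℓ,
        (U ^ (r * (ℓ - (h : ℕ)))) ((P (Tlin ((U ^ (r * (h : ℕ))) x)) : H)) = x := by
      intro h
      have h1 : P (Tlin ((U ^ (r * (h : ℕ))) x)) = ⟨(U ^ (r * (h : ℕ))) x, hUmem x hx _⟩ :=
        hPT ⟨(U ^ (r * (h : ℕ))) x, hUmem x hx _⟩
      rw [h1]
      exact he2 h x hx
    have hsum1 : ∑ h : Fin ℓ, (U ^ (r * (ℓ - (h : ℕ)))) ((P (Tlin ((U ^ (r * (h : ℕ))) x)) : H))
        = (ℓ : ℕ) • x := by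
      rw [Finset.sum_congr rfl fun h _ => hSx h]
      simp
    -- the goal's right-hand side, expanded
    have hgoal : ∑ j : Fin N, ∑ n : Fin ℓ,
        (inner ℂ ((U ^ (r * (n : ℕ))) (b j)) x : ℂ) • (U ^ (r * (n : ℕ))) (c j)
        = (ℓ : ℂ)⁻¹ • ∑ j : Fin N, ∑ n : Fin ℓ, ∑ g : Fin ℓ,
            (inner ℂ ((U ^ (r * (n : ℕ))) (b j)) x : ℂ)
              • (U ^ (r * ((n : ℕ) + ℓ - (g : ℕ)))) (z j g) := by
      rw [Finset.smul_sum]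
      refine Finset.sum_congr rfl fun j _ => ?_
      rw [Finset.smul_sum]
      refine Finset.sum_congr rfl fun n _ => ?_
      rw [hcdef j, map_smul, map_sum]
      rw [smul_comm _ ((ℓ : ℂ)⁻¹)]
      congr 1
      rw [Finset.smul_sum]
      refine Finset.sum_congr rfl fun g _ => ?_
      congr 1
      rw [← hpow, ← Nat.mul_add]
      have hg := g.isLt
      rw [show (n : ℕ) + (ℓ - (g : ℕ)) = (n : ℕ) + ℓ - (g : ℕ) from by omega]
    -- the combinatorial reindexing
    have hmain : ∑ h : Fin ℓ, ∑ j : Fin N, ∑ n : Fin ℓ,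
        (inner ℂ ((U ^ (r * ((n : ℕ) + ℓ - (h : ℕ)))) (b j)) x : ℂ)
          • (U ^ (r * (ℓ - (h : ℕ)))) (z j n)
        = ∑ j : Fin N, ∑ n : Fin ℓ, ∑ g : Fin ℓ,
            (inner ℂ ((U ^ (r * (n : ℕ))) (b j)) x : ℂ)
              • (U ^ (r * ((n : ℕ) + ℓ - (g : ℕ)))) (z j g) := by
      rw [Finset.sum_comm]
      refine Finset.sum_congr rfl fun j _ => ?_
      have step1 : ∀ n : Fin ℓ, (∑ g : Fin ℓ,
          (inner ℂ ((U ^ (r * (n : ℕ))) (b j)) x : ℂ)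
            • (U ^ (r * ((n : ℕ) + ℓ - (g : ℕ)))) (z j g))
          = ∑ h : Fin ℓ,
          (inner ℂ ((U ^ (r * (n : ℕ))) (b j)) x : ℂ)
            • (U ^ (r * ((n : ℕ) + ℓ - ((n + h : Fin ℓ) : ℕ)))) (z j (n + h)) := by
        intro n
        exact (Fintype.sum_equiv (Equiv.addLeft n) _ _ fun h => rfl).symm
      rw [Finset.sum_congr rfl fun n _ => step1 n]
      conv_rhs => rw [Finset.sum_comm]
      refine Finset.sum_congr rfl fun h _ => ?_
      refine Fintype.sum_equiv (Equiv.subRight h) _ _ ?_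
      intro n'
      simp only [Equiv.subRight_apply, sub_add_cancel]
      have hd := hsub h n'
      have hd1 := (n' - h).isLt
      have hd2 := h.isLt
      have hd3 := n'.isLt
      have hc1 : (inner ℂ ((U ^ (r * ((n' : ℕ) + ℓ - (h : ℕ)))) (b j)) x : ℂ)
          = inner ℂ ((U ^ (r * ((n' - h : Fin ℓ) : ℕ))) (b j)) x := by
        rcases hd with hcase | hcase
        · rw [show (n' : ℕ) + ℓ - (h : ℕ) = ((n' - h : Fin ℓ) : ℕ) + ℓ from by omega]
          refine hinner x hx _ _ _ ?_
          rw [Nat.mul_add, hl, Nat.add_mod_right]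
        · rw [show (n' : ℕ) + ℓ - (h : ℕ) = ((n' - h : Fin ℓ) : ℕ) from by omega]
      have hc2 : (U ^ (r * (ℓ - (h : ℕ)))) (z j n')
          = (U ^ (r * (((n' - h : Fin ℓ) : ℕ) + ℓ - (n' : ℕ)))) (z j n') := by
        rcases hd with hcase | hcase
        · rw [show ((n' - h : Fin ℓ) : ℕ) + ℓ - (n' : ℕ) = ℓ - (h : ℕ) from by omega]
        · rw [show ((n' - h : Fin ℓ) : ℕ) + ℓ - (n' : ℕ) = (ℓ - (h : ℕ)) + ℓ from by omega]
          refine hUeq _ (hzA j n') _ _ ?_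
          rw [Nat.mul_add, hl, Nat.add_mod_right]
      rw [hc1, hc2]
    -- put everything together
    rw [hgoal, ← hmain, ← Finset.sum_congr rfl fun h (_ : h ∈ Finset.univ) => hSexp h, hsum1]
    rw [← Nat.cast_smul_eq_nsmul ℂ, smul_smul,
      inv_mul_cancel₀ (by exact_mod_cast hℓ0.ne' : ((ℓ : ℕ) : ℂ) ≠ 0), one_smul]
end
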